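/- Let C be a field of characteristic zero and F = C(x) with x' = 1. An element f ∈ F is ∞-integrable in F (i.e. for every n ≥ 1 there exists η_n ∈ F with η_n^(n) = f) if and only if f ∈ C[x]. -/
import Mathlib

open Polynomial

namespace Stmt11Aux

variable {C : Type*} [Field C] [CharZero C]

/-- Antiderivative of a polynomial over a field of characteristic zero. -/
noncomputable def pint (p : C[X]) : C[X] :=
  p.sum fun i a => Polynomial.C (a / (i + 1)) * Polynomial.X ^ (i + 1)

lemma derivative_pint (p : C[X]) : derivative (pint p) = p := by
  conv_rhs => rw [← p.sum_C_mul_X_pow_eq]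
  unfold pint
  rw [Polynomial.sum, Polynomial.sum, map_sum]
  refine Finset.sum_congr rfl fun i _ => ?_
  have h1 : ((i : C) + 1) ≠ 0 := Nat.cast_add_one_ne_zero i
  have h2 : p.coeff i / ((i : C) + 1) * ((i + 1 : ℕ) : C) = p.coeff i := by
    push_cast
    exact div_mul_cancel₀ _ h1
  rw [derivative_C_mul_X_pow, Nat.add_sub_cancel, h2]

section D

variable (D : RatFunc C → RatFunc C)

lemma D_pow (hmul : ∀ a b : RatFunc C, D (a * b) = a * D b + D a * b) :
    ∀ (n : ℕ) (y : RatFunc C), D (y ^ (n + 1)) = ((n : RatFunc C) + 1) * y ^ n * D y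
  | 0, y => by simp
  | (n + 1), y => by
    rw [pow_succ', hmul, D_pow hmul n y]
    push_cast
    ring

lemma D_algebraMap
    (hadd : ∀ a b : RatFunc C, D (a + b) = D a + D b)
    (hmul : ∀ a b : RatFunc C, D (a * b) = a * D b + D a * b)
    (hC : ∀ c : C, D (algebraMap C (RatFunc C) c) = 0)
    (hX : D RatFunc.X = 1) (p : C[X]) :
    D (algebraMap C[X] (RatFunc C) p) = algebraMap C[X] (RatFunc C) (derivative p) := by
  have hCa : ∀ a : C, D (algebraMap C[X] (RatFunc C) (Polynomial.C a)) = 0 := by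
    intro a
    have := hC a
    rwa [IsScalarTower.algebraMap_apply C C[X] (RatFunc C), Polynomial.algebraMap_eq] at this
  induction p using Polynomial.induction_on with
  | C a => rw [hCa a, derivative_C, map_zero]
  | add p q hp hq => rw [map_add, hadd, hp, hq, derivative_add, map_add]
  | monomial n a _ =>
    rw [map_mul, map_pow, RatFunc.algebraMap_X, hmul, hCa a, zero_mul, add_zero,
      D_pow D hmul n RatFunc.X, hX, mul_one, derivative_C_mul_X_pow]
    simp only [Nat.add_sub_cancel, map_mul, map_pow, RatFunc.algebraMap_X, map_natCast,
      RatFunc.algebraMap_C]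
    push_cast
    ring

lemma D_div
    (hadd : ∀ a b : RatFunc C, D (a + b) = D a + D b)
    (hmul : ∀ a b : RatFunc C, D (a * b) = a * D b + D a * b)
    (hC : ∀ c : C, D (algebraMap C (RatFunc C) c) = 0)
    (hX : D RatFunc.X = 1) (a b : C[X]) (hb : b ≠ 0) :
    D (algebraMap C[X] (RatFunc C) a / algebraMap C[X] (RatFunc C) b) =
      algebraMap C[X] (RatFunc C) (derivative a * b - a * derivative b) /
        algebraMap C[X] (RatFunc C) (b ^ 2) := by
  set A := algebraMap C[X] (RatFunc C) with hA
  have hbne : A b ≠ 0 := RatFunc.algebraMap_ne_zero hb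
  have key : A b * (A a / A b) = A a := mul_div_cancel₀ _ hbne
  have h1 := hmul (A b) (A a / A b)
  rw [key, D_algebraMap D hadd hmul hC hX, D_algebraMap D hadd hmul hC hX] at h1
  rw [map_sub, map_mul, map_mul, map_pow]
  rw [eq_div_iff (pow_ne_zero 2 hbne)]
  field_simp at h1
  linear_combination -h1

end D

section Pi

variable {π : C[X]}

lemma not_dvd_derivative (hπ : Prime π) : ¬ π ∣ derivative π := by
  intro h
  have hd0 : derivative π ≠ 0 := by
    intro h0
    have hdeg : π.natDegree = 0 := natDegree_eq_zero_of_derivative_eq_zero h0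
    have : IsUnit π ∨ π = 0 := by
      obtain ⟨c, hc⟩ := Polynomial.natDegree_eq_zero.mp hdeg
      rcases eq_or_ne c 0 with h | h
      · right; rw [← hc, h, map_zero]
      · left; rw [← hc]; exact isUnit_C.mpr (isUnit_iff_ne_zero.mpr h)
    rcases this with h | h
    · exact hπ.not_unit h
    · exact hπ.ne_zero h
  have h2 := Polynomial.degree_le_of_dvd h hd0
  exact absurd h2 (not_le.mpr (Polynomial.degree_derivative_lt hπ.ne_zero))

lemma not_dvd_natCast (hπ : Prime π) (n : ℕ) : ¬ π ∣ ((n + 1 : ℕ) : C[X]) := by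
  intro h
  have h1 : (((n + 1 : ℕ) : C[X])) = Polynomial.C ((n + 1 : ℕ) : C) := by
    simp
  have hu : IsUnit (((n + 1 : ℕ) : C[X])) := by
    rw [h1]
    exact isUnit_C.mpr (isUnit_iff_ne_zero.mpr (Nat.cast_ne_zero.mpr (Nat.succ_ne_zero n)))
  exact hπ.not_unit (isUnit_of_dvd_unit h hu)

/-- `g` has no pole at `π`. -/
def Reg (π : C[X]) (g : RatFunc C) : Prop :=
  ∃ a b : C[X], b ≠ 0 ∧ ¬ π ∣ b ∧
    g = algebraMap C[X] (RatFunc C) a / algebraMap C[X] (RatFunc C) b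

/-- `g` has a pole of exact order `m` at `π`. -/
def Pole (π : C[X]) (m : ℕ) (g : RatFunc C) : Prop :=
  ∃ a b : C[X], b ≠ 0 ∧ ¬ π ∣ a ∧ ¬ π ∣ b ∧
    g = algebraMap C[X] (RatFunc C) a / algebraMap C[X] (RatFunc C) (π ^ m * b)

variable (D : RatFunc C → RatFunc C)
  (hadd : ∀ a b : RatFunc C, D (a + b) = D a + D b)
  (hmul : ∀ a b : RatFunc C, D (a * b) = a * D b + D a * b)
  (hC : ∀ c : C, D (algebraMap C (RatFunc C) c) = 0)
  (hX : D RatFunc.X = 1)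

include hadd hmul hC hX

lemma Reg.D_step (hπ : Prime π) {g : RatFunc C} (h : Reg π g) : Reg π (D g) := by
  obtain ⟨a, b, hb, hnd, rfl⟩ := h
  exact ⟨derivative a * b - a * derivative b, b ^ 2, pow_ne_zero 2 hb,
    fun hdvd => hnd (hπ.dvd_of_dvd_pow hdvd), D_div D hadd hmul hC hX a b hb⟩

lemma Pole.D_step (hπ : Prime π) {k : ℕ} {g : RatFunc C} (h : Pole π (k + 1) g) :
    Pole π (k + 2) (D g) := by
  obtain ⟨a, b, hb, hna, hnb, rfl⟩ := h
  have hπ0 : π ≠ 0 := hπ.ne_zero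
  have hden : π ^ (k + 1) * b ≠ 0 := mul_ne_zero (pow_ne_zero _ hπ0) hb
  set N1 : C[X] := derivative a * π * b - ((k + 1 : ℕ) : C[X]) * a * derivative π * b
      - a * π * derivative b with hN1
  have hnum : derivative a * (π ^ (k + 1) * b) - a * derivative (π ^ (k + 1) * b) =
      π ^ k * N1 := by
    rw [derivative_mul, derivative_pow, Nat.add_sub_cancel, Polynomial.C_eq_natCast, hN1]
    push_cast
    ring
  have hden2 : (π ^ (k + 1) * b) ^ 2 = π ^ k * (π ^ (k + 2) * b ^ 2) := by ring
  have hDg := D_div D hadd hmul hC hX a (π ^ (k + 1) * b) hden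
  rw [hnum, hden2] at hDg
  have hπk : algebraMap C[X] (RatFunc C) (π ^ k) ≠ 0 :=
    RatFunc.algebraMap_ne_zero (pow_ne_zero _ hπ0)
  have hDg2 : D (algebraMap C[X] (RatFunc C) a /
      algebraMap C[X] (RatFunc C) (π ^ (k + 1) * b)) =
      algebraMap C[X] (RatFunc C) N1 /
        algebraMap C[X] (RatFunc C) (π ^ (k + 2) * b ^ 2) := by
    rw [hDg, map_mul, map_mul, mul_div_mul_left _ _ hπk]
  refine ⟨N1, b ^ 2, pow_ne_zero 2 hb, ?_, fun hdvd => hnb (hπ.dvd_of_dvd_pow hdvd), hDg2⟩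
  -- π does not divide N1
  intro hdvd
  have h2 : π ∣ ((k + 1 : ℕ) : C[X]) * a * derivative π * b := by
    have : ((k + 1 : ℕ) : C[X]) * a * derivative π * b =
        π * (derivative a * b - a * derivative b) - N1 := by rw [hN1]; ring
    rw [this]
    exact dvd_sub (Dvd.intro _ rfl) hdvd
  rcases hπ.dvd_mul.mp h2 with h3 | h3
  · rcases hπ.dvd_mul.mp h3 with h4 | h4
    · rcases hπ.dvd_mul.mp h4 with h5 | h5
      · exact not_dvd_natCast hπ k h5
      · exact hna h5
    · exact not_dvd_derivative hπ h4
  · exact hnb h3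

lemma reg_iterate (hπ : Prime π) {g : RatFunc C} (h : Reg π g) (n : ℕ) :
    Reg π (D^[n] g) := by
  induction n with
  | zero => simpa using h
  | succ n ih =>
    rw [Function.iterate_succ_apply']
    exact Reg.D_step D hadd hmul hC hX hπ ih

lemma pole_iterate (hπ : Prime π) {k : ℕ} {g : RatFunc C} (h : Pole π (k + 1) g) (n : ℕ) :
    Pole π (k + 1 + n) (D^[n] g) := by
  induction n with
  | zero => simpa using h
  | succ n ih =>
    rw [Function.iterate_succ_apply']
    have := Pole.D_step D hadd hmul hC hX hπ (k := k + n) (by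
      rwa [show k + n + 1 = k + 1 + n by omega])
    rwa [show k + n + 2 = k + 1 + (n + 1) by omega] at this

omit hadd hmul hC hX

lemma not_reg_and_pole (hπ : Prime π) {g : RatFunc C} {m : ℕ}
    (h1 : Reg π g) (h2 : Pole π (m + 1) g) : False := by
  obtain ⟨c, d, hd, hnd, he1⟩ := h1
  obtain ⟨a, b, hb, hna, hnb, he2⟩ := h2
  have hd' : algebraMap C[X] (RatFunc C) d ≠ 0 := RatFunc.algebraMap_ne_zero hd
  have hden : (π ^ (m + 1) * b) ≠ 0 := mul_ne_zero (pow_ne_zero _ hπ.ne_zero) hb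
  have hden' : algebraMap C[X] (RatFunc C) (π ^ (m + 1) * b) ≠ 0 :=
    RatFunc.algebraMap_ne_zero hden
  have he3 : algebraMap C[X] (RatFunc C) c / algebraMap C[X] (RatFunc C) d =
      algebraMap C[X] (RatFunc C) a / algebraMap C[X] (RatFunc C) (π ^ (m + 1) * b) :=
    he1.symm.trans he2
  have he4 := (div_eq_div_iff hd' hden').mp he3
  rw [← map_mul, ← map_mul] at he4
  have heq2 : c * (π ^ (m + 1) * b) = a * d := RatFunc.algebraMap_injective C he4
  have hdvd : π ∣ a * d := heq2 ▸ ⟨π ^ m * (c * b), by ring⟩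
  rcases hπ.dvd_mul.mp hdvd with h | h
  · exact hna h
  · exact hnd h

lemma not_pole_and_pole (hπ : Prime π) {g : RatFunc C} {m t : ℕ}
    (h1 : Pole π (m + 1) g) (h2 : Pole π (m + 1 + (t + 1)) g) : False := by
  obtain ⟨a, b, hb, hna, hnb, he1⟩ := h1
  obtain ⟨c, d, hd, hnc, hnd, he2⟩ := h2
  have h1' : (π ^ (m + 1) * b) ≠ 0 := mul_ne_zero (pow_ne_zero _ hπ.ne_zero) hb
  have h2' : (π ^ (m + 1 + (t + 1)) * d) ≠ 0 := mul_ne_zero (pow_ne_zero _ hπ.ne_zero) hd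
  have hA1 : algebraMap C[X] (RatFunc C) (π ^ (m + 1) * b) ≠ 0 :=
    RatFunc.algebraMap_ne_zero h1'
  have hA2 : algebraMap C[X] (RatFunc C) (π ^ (m + 1 + (t + 1)) * d) ≠ 0 :=
    RatFunc.algebraMap_ne_zero h2'
  have he3 := he1.symm.trans he2
  have he4 := (div_eq_div_iff hA1 hA2).mp he3
  rw [← map_mul, ← map_mul] at he4
  have heq2 : a * (π ^ (m + 1 + (t + 1)) * d) = c * (π ^ (m + 1) * b) :=
    RatFunc.algebraMap_injective C he4
  have heq3 : π ^ (m + 1) * (a * (π ^ (t + 1) * d)) = π ^ (m + 1) * (c * b) := by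
    linear_combination heq2
  have heq4 : a * (π ^ (t + 1) * d) = c * b :=
    mul_left_cancel₀ (pow_ne_zero _ hπ.ne_zero) heq3
  have hdvd : π ∣ c * b := heq4 ▸ ⟨a * (π ^ t * d), by ring⟩
  rcases hπ.dvd_mul.mp hdvd with h | h
  · exact hnc h
  · exact hnb h

lemma pole_of_dvd_denom (hπ : Prime π) {f : RatFunc C} (hdvd : π ∣ f.denom) :
    ∃ k, Pole π (k + 1) f := by
  have hnum : ¬ π ∣ f.num := fun h =>
    hπ.not_unit ((RatFunc.isCoprime_num_denom f).isUnit_of_dvd' h hdvd)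
  obtain ⟨n, c, hc, heq⟩ := WfDvdMonoid.max_power_factor f.denom_ne_zero hπ.irreducible
  have hc0 : c ≠ 0 := by
    intro h0
    exact f.denom_ne_zero (by rw [heq, h0, mul_zero])
  cases n with
  | zero =>
    exfalso
    rw [heq, pow_zero, one_mul] at hdvd
    exact hc hdvd
  | succ k =>
    refine ⟨k, f.num, c, hc0, hnum, hc, ?_⟩
    conv_lhs => rw [← f.num_div_denom, heq]

lemma form (hπ : Prime π) (g : RatFunc C) :
    Reg π g ∨ ∃ k, Pole π (k + 1) g := by
  by_cases hdvd : π ∣ g.denom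
  · exact Or.inr (pole_of_dvd_denom hπ hdvd)
  · exact Or.inl ⟨g.num, g.denom, g.denom_ne_zero, hdvd, (g.num_div_denom).symm⟩

end Pi

end Stmt11Aux

open Stmt11Aux in
/-- in `F = C(x)` with `x' = 1`, an element is ∞-integrable
(has `n`-th antiderivatives in `F` for all `n ≥ 1`) iff it is a polynomial
in `x`. -/
theorem stmt_11 (C : Type*) [Field C] [CharZero C]
    (D : RatFunc C → RatFunc C)
    (hadd : ∀ a b : RatFunc C, D (a + b) = D a + D b)
    (hmul : ∀ a b : RatFunc C, D (a * b) = a * D b + D a * b)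
    (hC : ∀ c : C, D (algebraMap C (RatFunc C) c) = 0)
    (hX : D RatFunc.X = 1)
    (f : RatFunc C) :
    (∀ n : ℕ, 1 ≤ n → ∃ η : RatFunc C, D^[n] η = f) ↔
      ∃ p : Polynomial C, algebraMap (Polynomial C) (RatFunc C) p = f := by
  constructor
  · intro h
    by_cases hd1 : f.denom = 1
    · refine ⟨f.num, ?_⟩
      conv_rhs => rw [← f.num_div_denom, hd1]
      rw [map_one, div_one]
    · exfalso
      have hdu : ¬ IsUnit f.denom := fun hu => hd1 ((f.monic_denom).eq_one_of_isUnit hu)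
      obtain ⟨π, hirr, hdvd⟩ := WfDvdMonoid.exists_irreducible_factor hdu f.denom_ne_zero
      have hπ : Prime π := hirr.prime
      obtain ⟨m, hpole⟩ := pole_of_dvd_denom hπ hdvd
      obtain ⟨η, hη⟩ := h (m + 1) (Nat.le_add_left 1 m)
      rcases form hπ η with hreg | ⟨k, hk⟩
      · have := reg_iterate D hadd hmul hC hX hπ hreg (m + 1)
        rw [hη] at this
        exact not_reg_and_pole hπ this hpole
      · have h2 := pole_iterate D hadd hmul hC hX hπ hk (m + 1)
        rw [hη, show k + 1 + (m + 1) = m + 1 + (k + 1) by omega] at h2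
        exact not_pole_and_pole hπ hpole h2
  · rintro ⟨p, rfl⟩ n hn
    refine ⟨algebraMap (Polynomial C) (RatFunc C) (pint^[n] p), ?_⟩
    have key : ∀ (j : ℕ) (q : Polynomial C),
        D^[j] (algebraMap (Polynomial C) (RatFunc C) q) =
          algebraMap (Polynomial C) (RatFunc C)
            ((fun q : Polynomial C => Polynomial.derivative q)^[j] q) := by
      intro j
      induction j with
      | zero => intro q; simp
      | succ j ih =>
        intro q
        rw [Function.iterate_succ_apply, D_algebraMap D hadd hmul hC hX, ih,
          Function.iterate_succ_apply]
    rw [key]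
    congr 1
    exact Function.LeftInverse.iterate
      (g := fun q : Polynomial C => Polynomial.derivative q) derivative_pint n p
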